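/- arXiv:2106.08205 — 3 statements merged into one kernel-verified Lean document; each statement's English description precedes it below -/
import Mathlib

section
/- For i = 1, 2 let γ_i, μ_i, κ_i, α_i, τ_i > 0 with γ₁·e^{−μ₁τ₁} > μ₁ and γ₂·e^{−μ₂τ₂} ≤ μ₂ (i.e., R₀⁽¹⁾ > 1 and R₀⁽²⁾ ≤ 1), and let x₁* > 0 be the unique positive root of γ₁·e^{−τ₁(μ₁ + κ₁x)} = μ₁ + κ₁x. Then every bounded continuous positive solution (x₁(t), x₂(t)) of the competition system x₁'(t) = γ₁·x₁(t−τ₁)·exp(−μ₁τ₁ − ∫_{t−τ₁}^{t}(κ₁x₁(s) + α₂x₂(s))ds) − μ₁x₁(t) − κ₁x₁²(t) − α₂x₁(t)x₂(t), x₂'(t) = γ₂·x₂(t−τ₂)·exp(−μ₂τ₂ − ∫_{t−τ₂}^{t}(κ₂x₂(s) + α₁x₁(s))ds) − μ₂x₂(t) − κ₂x₂²(t) − α₁x₁(t)x₂(t) converges to the semi-trivial equilibrium E₁ = (x₁*, 0) as t → ∞. -/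
open Set Filter MeasureTheory intervalIntegral


private lemma myAntitoneOn {f g : ℝ → ℝ} {a b : ℝ}
    (hd : ∀ t ∈ Set.Icc a b, HasDerivAt f (g t) t)
    (hg : ∀ t ∈ Set.Ioo a b, g t ≤ 0) : AntitoneOn f (Set.Icc a b) := by
  apply antitoneOn_of_deriv_nonpos (convex_Icc a b)
  · exact fun t ht => (hd t ht).continuousAt.continuousWithinAt
  · intro t ht
    rw [interior_Icc] at ht
    exact (hd t (Ioo_subset_Icc_self ht)).differentiableAt.differentiableWithinAt
  · intro t ht
    rw [interior_Icc] at ht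
    rw [(hd t (Ioo_subset_Icc_self ht)).deriv]
    exact hg t ht

private lemma myMonotoneOn {f g : ℝ → ℝ} {a b : ℝ}
    (hd : ∀ t ∈ Set.Icc a b, HasDerivAt f (g t) t)
    (hg : ∀ t ∈ Set.Ioo a b, 0 ≤ g t) : MonotoneOn f (Set.Icc a b) := by
  apply monotoneOn_of_deriv_nonneg (convex_Icc a b)
  · exact fun t ht => (hd t ht).continuousAt.continuousWithinAt
  · intro t ht
    rw [interior_Icc] at ht
    exact (hd t (Ioo_subset_Icc_self ht)).differentiableAt.differentiableWithinAt
  · intro t ht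
    rw [interior_Icc] at ht
    rw [(hd t (Ioo_subset_Icc_self ht)).deriv]
    exact hg t ht

private lemma scalar_converge {κ L : ℝ} (hκ : 0 < κ) (hL : 0 < L) (f ε : ℝ → ℝ)
    (hf_pos : ∀ t, 1 ≤ t → 0 < f t)
    (hode : ∀ t, 1 ≤ t → HasDerivAt f (f t * (κ * (L - f t) + ε t)) t)
    (hε : Filter.Tendsto ε Filter.atTop (nhds 0)) :
    Filter.Tendsto f Filter.atTop (nhds L) := by
  rw [Metric.tendsto_atTop]
  intro e he
  set δ := e / 2 with hδdef
  have hδ : 0 < δ := by positivity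
  obtain ⟨T₀, hT₀⟩ := Metric.tendsto_atTop.1 hε (κ * δ / 2) (by positivity)
  set T := max T₀ 1 with hTdef
  have hT1 : (1 : ℝ) ≤ T := le_max_right _ _
  have hεs : ∀ t, T ≤ t → |ε t| < κ * δ / 2 := by
    intro t ht
    have := hT₀ t (le_trans (le_max_left _ _) ht)
    rwa [Real.dist_eq, sub_zero] at this
  -- derivative sign facts
  have hup : ∀ t, T ≤ t → L + δ ≤ f t →
      f t * (κ * (L - f t) + ε t) ≤ -((L + δ) * (κ * δ / 2)) := by
    intro t ht hf
    have h1 : κ * (L - f t) ≤ -(κ * δ) := by nlinarith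
    have h2 : ε t < κ * δ / 2 := (abs_lt.1 (hεs t ht)).2
    have h3 : κ * (L - f t) + ε t ≤ -(κ * δ / 2) := by linarith
    have h4 : 0 < f t := hf_pos t (le_trans hT1 ht)
    nlinarith
  have hdown : ∀ t, T ≤ t → f t ≤ L - δ →
      f t * (κ * δ / 2) ≤ f t * (κ * (L - f t) + ε t) := by
    intro t ht hf
    have h1 : κ * δ ≤ κ * (L - f t) := by nlinarith
    have h2 : -(κ * δ / 2) < ε t := (abs_lt.1 (hεs t ht)).1
    have h4 : 0 < f t := hf_pos t (le_trans hT1 ht)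
    nlinarith
  -- UPPER part
  set c₁ := (L + δ) * (κ * δ / 2) with hc₁def
  have hc₁ : 0 < c₁ := by positivity
  have hU1 : ∃ t₀, T ≤ t₀ ∧ f t₀ ≤ L + δ := by
    by_contra hcon
    push_neg at hcon
    set ts := T + (f T + 1) / c₁ with htsdef
    have hts : T ≤ ts := by
      have : 0 < (f T + 1) / c₁ := by
        have := hf_pos T hT1; positivity
      simp [htsdef]; linarith
    have hanti : AntitoneOn (fun t => f t + c₁ * t) (Set.Icc T ts) := by
      apply myAntitoneOn (g := fun t => f t * (κ * (L - f t) + ε t) + c₁)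
      · intro t ht
        have := (hode t (le_trans hT1 ht.1)).add ((hasDerivAt_id t).const_mul c₁)
        exact this.congr_deriv (by ring)
      · intro t ht
        have := hup t ht.1.le (hcon t ht.1.le).le
        linarith
    have := hanti (Set.left_mem_Icc.2 hts) ⟨hts, le_refl ts⟩ hts
    simp only [] at this
    have hev : f ts ≤ f T - (f T + 1) := by
      have hc : c₁ * ts - c₁ * T = f T + 1 := by
        rw [htsdef]; field_simp; ring
      nlinarith
    have := hf_pos ts (le_trans hT1 hts)
    linarith
  obtain ⟨t₀, ht₀T, ht₀⟩ := hU1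
  have hU2 : ∀ t, t₀ ≤ t → f t ≤ L + δ := by
    intro t₁ ht₁
    by_contra hcon
    push_neg at hcon
    have hfc : ContinuousOn f (Set.Icc t₀ t₁) := fun t ht =>
      (hode t (le_trans hT1 (le_trans ht₀T ht.1))).continuousAt.continuousWithinAt
    set S := Set.Icc t₀ t₁ ∩ f ⁻¹' (Set.Iic (L + δ)) with hSdef
    have hSne : S.Nonempty := ⟨t₀, ⟨le_refl _, ht₁⟩, ht₀⟩
    have hScl : IsClosed S := hfc.preimage_isClosed_of_isClosed isClosed_Icc isClosed_Iic
    have hSbdd : BddAbove S := (bddAbove_Icc).mono (Set.inter_subset_left)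
    set σ := sSup S with hσdef
    have hσS : σ ∈ S := hScl.csSup_mem hSne hSbdd
    have hσt₁ : σ < t₁ := by
      rcases lt_or_eq_of_le hσS.1.2 with h | h
      · exact h
      · exfalso; have := hσS.2; rw [h] at this; simp at this; linarith
    have hover : ∀ r ∈ Set.Ioo σ t₁, L + δ < f r := by
      intro r hr
      by_contra hle
      push_neg at hle
      have hrS : r ∈ S := ⟨⟨le_trans hσS.1.1 hr.1.le, hr.2.le⟩, hle⟩
      exact absurd (le_csSup hSbdd hrS) (not_le.2 hr.1)
    have hanti : AntitoneOn f (Set.Icc σ t₁) := by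
      apply myAntitoneOn (g := fun t => f t * (κ * (L - f t) + ε t))
      · intro t ht
        exact hode t (le_trans hT1 (le_trans ht₀T (le_trans hσS.1.1 ht.1)))
      · intro t ht
        have := hup t (le_trans ht₀T (le_trans hσS.1.1 ht.1.le)) (hover t ht).le
        have : f t * (κ * (L - f t) + ε t) ≤ -c₁ := this
        linarith
    have := hanti ⟨le_refl σ, hσt₁.le⟩ ⟨hσS.1.2, le_refl t₁⟩ hσt₁.le
    have := hσS.2
    simp only [Set.mem_preimage, Set.mem_Iic] at this
    linarith
  -- LOWER part
  have hL1 : ∃ t₀', T ≤ t₀' ∧ L - δ ≤ f t₀' := by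
    by_contra hcon
    push_neg at hcon
    have hmono : ∀ t, T ≤ t → f T ≤ f t := by
      intro t ht
      have hm : MonotoneOn f (Set.Icc T t) := by
        apply myMonotoneOn (g := fun t => f t * (κ * (L - f t) + ε t))
        · intro r hr; exact hode r (le_trans hT1 hr.1)
        · intro r hr
          have := hdown r hr.1.le (hcon r hr.1.le).le
          have h4 : 0 < f r := hf_pos r (le_trans hT1 hr.1.le)
          nlinarith
      exact hm (Set.left_mem_Icc.2 ht) ⟨ht, le_refl t⟩ ht
    set c₂ := f T * (κ * δ / 2) with hc₂def
    have hfT : 0 < f T := hf_pos T hT1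
    have hc₂ : 0 < c₂ := by positivity
    set ts := T + (L + 1) / c₂ with htsdef
    have hts : T ≤ ts := by
      have : 0 < (L + 1) / c₂ := by positivity
      simp [htsdef]; linarith
    have hmono2 : MonotoneOn (fun t => f t - c₂ * t) (Set.Icc T ts) := by
      apply myMonotoneOn (g := fun t => f t * (κ * (L - f t) + ε t) - c₂)
      · intro t ht
        have := (hode t (le_trans hT1 ht.1)).sub ((hasDerivAt_id t).const_mul c₂)
        exact this.congr_deriv (by ring)
      · intro t ht
        have h1 := hdown t ht.1.le (hcon t ht.1.le).le
        have h2 := hmono t ht.1.le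
        have h4 : 0 < f t := hf_pos t (le_trans hT1 ht.1.le)
        nlinarith
    have := hmono2 (Set.left_mem_Icc.2 hts) ⟨hts, le_refl ts⟩ hts
    simp only [] at this
    have hc : c₂ * ts - c₂ * T = L + 1 := by
      rw [htsdef]; field_simp; ring
    have hfin : L + 1 + f T ≤ f ts := by nlinarith
    have := hcon ts hts
    linarith
  obtain ⟨t₀', ht₀'T, ht₀'⟩ := hL1
  have hL2 : ∀ t, t₀' ≤ t → L - δ ≤ f t := by
    intro t₁ ht₁
    by_contra hcon
    push_neg at hcon
    have hfc : ContinuousOn f (Set.Icc t₀' t₁) := fun t ht =>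
      (hode t (le_trans hT1 (le_trans ht₀'T ht.1))).continuousAt.continuousWithinAt
    set S := Set.Icc t₀' t₁ ∩ f ⁻¹' (Set.Ici (L - δ)) with hSdef
    have hSne : S.Nonempty := ⟨t₀', ⟨le_refl _, ht₁⟩, ht₀'⟩
    have hScl : IsClosed S := hfc.preimage_isClosed_of_isClosed isClosed_Icc isClosed_Ici
    have hSbdd : BddAbove S := (bddAbove_Icc).mono (Set.inter_subset_left)
    set σ := sSup S with hσdef
    have hσS : σ ∈ S := hScl.csSup_mem hSne hSbdd
    have hσt₁ : σ < t₁ := by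
      rcases lt_or_eq_of_le hσS.1.2 with h | h
      · exact h
      · exfalso; have := hσS.2; rw [h] at this; simp at this; linarith
    have hover : ∀ r ∈ Set.Ioo σ t₁, f r < L - δ := by
      intro r hr
      by_contra hle
      push_neg at hle
      have hrS : r ∈ S := ⟨⟨le_trans hσS.1.1 hr.1.le, hr.2.le⟩, hle⟩
      exact absurd (le_csSup hSbdd hrS) (not_le.2 hr.1)
    have hmono : MonotoneOn f (Set.Icc σ t₁) := by
      apply myMonotoneOn (g := fun t => f t * (κ * (L - f t) + ε t))
      · intro t ht
        exact hode t (le_trans hT1 (le_trans ht₀'T (le_trans hσS.1.1 ht.1)))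
      · intro t ht
        have h1 := hdown t (le_trans ht₀'T (le_trans hσS.1.1 ht.1.le)) (hover t ht).le
        have h4 : 0 < f t := hf_pos t (le_trans hT1 (le_trans ht₀'T (le_trans hσS.1.1 ht.1.le)))
        nlinarith
    have := hmono ⟨le_refl σ, hσt₁.le⟩ ⟨hσS.1.2, le_refl t₁⟩ hσt₁.le
    have h2 := hσS.2
    simp only [Set.mem_preimage, Set.mem_Ici] at h2
    linarith
  refine ⟨max t₀ t₀', fun t ht => ?_⟩
  have h1 := hU2 t (le_trans (le_max_left _ _) ht)
  have h2 := hL2 t (le_trans (le_max_right _ _) ht)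
  rw [Real.dist_eq, abs_lt]
  constructor <;> simp only [hδdef] at h1 h2 <;> linarith

private lemma delay_consensus {lam τ : ℝ} (hlam : 0 < lam) (hτ : 0 < τ) (v : ℝ → ℝ)
    (hv_cont : ContinuousOn v (Set.Ici (-τ)))
    (hv_pos : ∀ t, -τ ≤ t → 0 < v t)
    (hv_ode : ∀ t, 0 < t → HasDerivAt v (lam * (v (t - τ) - v t)) t) :
    ∃ c, 0 < c ∧ Filter.Tendsto v Filter.atTop (nhds c) := by
  have hτ0 : -τ ≤ 0 := by linarith
  -- basic continuity helpers
  have hvc : ∀ {a b : ℝ}, -τ ≤ a → ContinuousOn v (Set.Icc a b) := by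
    intro a b ha
    exact hv_cont.mono (fun r hr => le_trans ha hr.1)
  have hexp_cont : Continuous (fun r : ℝ => Real.exp (lam * r)) :=
    Real.continuous_exp.comp (continuous_const.mul continuous_id)
  -- derivative of C * exponential
  have hexp_deriv : ∀ (C r : ℝ), HasDerivAt (fun y => Real.exp (lam * y) * C)
      (lam * Real.exp (lam * r) * C) r := by
    intro C r
    have h1 : HasDerivAt (fun y : ℝ => lam * y) lam r := by
      simpa using (hasDerivAt_id r).const_mul lam
    have h2 := (Real.hasDerivAt_exp (lam * r)).comp r h1
    have h3 := h2.mul_const C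
    exact h3.congr_deriv (by ring)
  have hIconst : ∀ (C a b : ℝ), (∫ r in a..b, lam * Real.exp (lam * r) * C)
      = Real.exp (lam * b) * C - Real.exp (lam * a) * C := by
    intro C a b
    apply intervalIntegral.integral_eq_sub_of_hasDerivAt (fun r _ => hexp_deriv C r)
    exact ((continuous_const.mul hexp_cont).mul continuous_const).intervalIntegrable a b
  have hint : ∀ s t : ℝ, 0 ≤ s → s ≤ t →
      IntervalIntegrable (fun r => lam * Real.exp (lam * r) * v (r - τ)) volume s t := by
    intro s t hs hst
    apply ContinuousOn.intervalIntegrable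
    apply ContinuousOn.mul (continuous_const.mul hexp_cont).continuousOn
    apply hv_cont.comp (continuous_id.sub continuous_const).continuousOn
    intro r hr
    rw [Set.uIcc_of_le hst] at hr
    simp only [Set.mem_Ici, id_eq, Pi.sub_apply]
    have := hr.1
    linarith
  have hg_deriv : ∀ x : ℝ, 0 < x → HasDerivAt (fun r => Real.exp (lam * r) * v r)
      (lam * Real.exp (lam * x) * v (x - τ)) x := by
    intro x hx
    have h1 : HasDerivAt (fun y : ℝ => Real.exp (lam * y)) (lam * Real.exp (lam * x)) x := by
      have h0 : HasDerivAt (fun y : ℝ => lam * y) lam x := by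
        simpa using (hasDerivAt_id x).const_mul lam
      have := (Real.hasDerivAt_exp (lam * x)).comp x h0
      exact this.congr_deriv (by ring)
    have h2 := h1.mul (hv_ode x hx)
    exact h2.congr_deriv (by ring)
  -- variation of constants identity
  have hvoc : ∀ s t : ℝ, 0 ≤ s → s ≤ t → Real.exp (lam * t) * v t
      = Real.exp (lam * s) * v s + ∫ r in s..t, lam * Real.exp (lam * r) * v (r - τ) := by
    intro s t hs hst
    have hcont : ContinuousOn (fun r => Real.exp (lam * r) * v r) (Set.Icc s t) :=
      hexp_cont.continuousOn.mul (hvc (by linarith))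
    have := intervalIntegral.integral_eq_sub_of_hasDeriv_right_of_le hst hcont
      (fun x hx => (hg_deriv x (lt_of_le_of_lt hs hx.1)).hasDerivWithinAt)
      (hint s t hs hst)
    linarith
  -- windows
  set W := fun s : ℝ => v '' Set.Icc (s - τ) s with hWdef
  have hWne : ∀ s : ℝ, (W s).Nonempty :=
    fun s => (Set.nonempty_Icc.2 (by linarith)).image v
  have hWsub : ∀ s : ℝ, 0 ≤ s → Set.Icc (s - τ) s ⊆ Set.Ici (-τ) := by
    intro s hs r hr
    simp only [Set.mem_Ici]
    have := hr.1
    linarith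
  have hWbddA : ∀ s : ℝ, 0 ≤ s → BddAbove (W s) :=
    fun s hs => isCompact_Icc.bddAbove_image (hv_cont.mono (hWsub s hs))
  have hWbddB : ∀ s : ℝ, 0 ≤ s → BddBelow (W s) :=
    fun s hs => isCompact_Icc.bddBelow_image (hv_cont.mono (hWsub s hs))
  set M := fun s : ℝ => sSup (W s) with hMdef
  set m := fun s : ℝ => sInf (W s) with hmdef
  have hvleM : ∀ s : ℝ, 0 ≤ s → ∀ r, s - τ ≤ r → r ≤ s → v r ≤ M s :=
    fun s hs r h1 h2 => le_csSup (hWbddA s hs) ⟨r, ⟨h1, h2⟩, rfl⟩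
  have hmlev : ∀ s : ℝ, 0 ≤ s → ∀ r, s - τ ≤ r → r ≤ s → m s ≤ v r :=
    fun s hs r h1 h2 => csInf_le (hWbddB s hs) ⟨r, ⟨h1, h2⟩, rfl⟩
  -- propagation of upper bound
  have hMkey : ∀ s : ℝ, 0 ≤ s → ∀ n : ℕ, ∀ t, s - τ ≤ t → t ≤ s + n * τ → v t ≤ M s := by
    intro s hs n
    induction n with
    | zero =>
      intro t h1 h2
      simp only [Nat.cast_zero, zero_mul, add_zero] at h2
      exact hvleM s hs t h1 h2
    | succ n ih =>
      intro t h1 h2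
      by_cases hc : t ≤ s + n * τ
      · exact ih t h1 hc
      push_neg at hc
      have hs'0 : (0:ℝ) ≤ s + n * τ := by positivity
      have hvoc' := hvoc (s + n * τ) t hs'0 hc.le
      have hb : (∫ r in (s + n * τ)..t, lam * Real.exp (lam * r) * v (r - τ))
          ≤ ∫ r in (s + n * τ)..t, lam * Real.exp (lam * r) * M s := by
        apply intervalIntegral.integral_mono_on hc.le (hint _ t hs'0 hc.le)
          (((continuous_const.mul hexp_cont).mul continuous_const).intervalIntegrable _ _)
        intro r hr
        have hnτ : (0:ℝ) ≤ n * τ := by positivity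
        have hvr : v (r - τ) ≤ M s := by
          apply ih (r - τ)
          · have := hr.1; linarith
          · have := hr.2
            push_cast at h2 ⊢
            linarith
        have hexp : 0 ≤ lam * Real.exp (lam * r) := by positivity
        exact mul_le_mul_of_nonneg_left hvr hexp
      rw [hIconst (M s) (s + n * τ) t] at hb
      have hnτ' : (0:ℝ) ≤ (n:ℝ) * τ := by positivity
      have hvs' : v (s + n * τ) ≤ M s := ih (s + n * τ) (by linarith) le_rfl
      have he1 : (0:ℝ) < Real.exp (lam * (s + n * τ)) := Real.exp_pos _
      have he2 : (0:ℝ) < Real.exp (lam * t) := Real.exp_pos _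
      have : Real.exp (lam * t) * v t ≤ Real.exp (lam * t) * M s := by nlinarith
      exact le_of_mul_le_mul_left this he2
  have hMbound : ∀ s : ℝ, 0 ≤ s → ∀ t, s - τ ≤ t → v t ≤ M s := by
    intro s hs t ht
    obtain ⟨n, hn⟩ := exists_nat_ge ((t - s) / τ)
    refine hMkey s hs n t ht ?_
    rw [div_le_iff₀ hτ] at hn
    linarith
  -- propagation of lower bound
  have hmkey : ∀ s : ℝ, 0 ≤ s → ∀ n : ℕ, ∀ t, s - τ ≤ t → t ≤ s + n * τ → m s ≤ v t := by
    intro s hs n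
    induction n with
    | zero =>
      intro t h1 h2
      simp only [Nat.cast_zero, zero_mul, add_zero] at h2
      exact hmlev s hs t h1 h2
    | succ n ih =>
      intro t h1 h2
      by_cases hc : t ≤ s + n * τ
      · exact ih t h1 hc
      push_neg at hc
      have hs'0 : (0:ℝ) ≤ s + n * τ := by positivity
      have hvoc' := hvoc (s + n * τ) t hs'0 hc.le
      have hb : (∫ r in (s + n * τ)..t, lam * Real.exp (lam * r) * m s)
          ≤ ∫ r in (s + n * τ)..t, lam * Real.exp (lam * r) * v (r - τ) := by
        apply intervalIntegral.integral_mono_on hc.le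
          (((continuous_const.mul hexp_cont).mul continuous_const).intervalIntegrable _ _)
          (hint _ t hs'0 hc.le)
        intro r hr
        have hnτ : (0:ℝ) ≤ (n:ℝ) * τ := by positivity
        have hvr : m s ≤ v (r - τ) := by
          apply ih (r - τ)
          · have := hr.1; linarith
          · have := hr.2
            push_cast at h2 ⊢
            linarith
        have hexp : 0 ≤ lam * Real.exp (lam * r) := by positivity
        exact mul_le_mul_of_nonneg_left hvr hexp
      rw [hIconst (m s) (s + n * τ) t] at hb
      have hnτ' : (0:ℝ) ≤ (n:ℝ) * τ := by positivity
      have hvs' : m s ≤ v (s + n * τ) := ih (s + n * τ) (by linarith) le_rfl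
      have he1 : (0:ℝ) < Real.exp (lam * (s + n * τ)) := Real.exp_pos _
      have he2 : (0:ℝ) < Real.exp (lam * t) := Real.exp_pos _
      have : Real.exp (lam * t) * m s ≤ Real.exp (lam * t) * v t := by nlinarith
      exact le_of_mul_le_mul_left this he2
  have hmbound : ∀ s : ℝ, 0 ≤ s → ∀ t, s - τ ≤ t → m s ≤ v t := by
    intro s hs t ht
    obtain ⟨n, hn⟩ := exists_nat_ge ((t - s) / τ)
    refine hmkey s hs n t ht ?_
    rw [div_le_iff₀ hτ] at hn
    linarith
  -- monotonicity of window extrema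
  have hM_anti : ∀ s s' : ℝ, 0 ≤ s → s ≤ s' → M s' ≤ M s := by
    intro s s' hs hss'
    apply csSup_le (hWne s')
    rintro x ⟨r, hr, rfl⟩
    exact hMbound s hs r (by have := hr.1; linarith)
  have hm_mono : ∀ s s' : ℝ, 0 ≤ s → s ≤ s' → m s ≤ m s' := by
    intro s s' hs hss'
    apply le_csInf (hWne s')
    rintro x ⟨r, hr, rfl⟩
    exact hmbound s hs r (by have := hr.1; linarith)
  set MM := fun s : ℝ => M (max s 0) with hMMdef
  set mm := fun s : ℝ => m (max s 0) with hmmdef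
  have hMM_anti : Antitone MM :=
    fun a b hab => hM_anti (max a 0) (max b 0) (le_max_right _ _) (max_le_max hab le_rfl)
  have hmm_mono : Monotone mm :=
    fun a b hab => hm_mono (max a 0) (max b 0) (le_max_right _ _) (max_le_max hab le_rfl)
  -- positivity of m 0
  have hm0 : 0 < m 0 := by
    obtain ⟨r₀, hr₀mem, hr₀min⟩ := isCompact_Icc.exists_isMinOn
      (Set.nonempty_Icc.2 (by linarith : (0:ℝ) - τ ≤ 0)) (hvc (by linarith))
    have h1 : v r₀ ≤ m 0 := by
      apply le_csInf (hWne 0)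
      rintro x ⟨r, hr, rfl⟩
      exact hr₀min hr
    have h2 : 0 < v r₀ := hv_pos r₀ (by have := hr₀mem.1; linarith)
    linarith
  have hmm_lb : ∀ s, m 0 ≤ mm s := by
    intro s
    have : mm 0 ≤ mm s := by
      by_cases h : 0 ≤ s
      · exact hmm_mono h
      · exact le_of_eq (by rw [hmmdef]; norm_num; rw [max_eq_right (le_of_not_ge h)])
    simpa [hmmdef] using this
  have hmleM : ∀ s, mm s ≤ MM s := by
    intro s
    have h0 : (0:ℝ) ≤ max s 0 := le_max_right _ _
    calc mm s ≤ v (max s 0) := hmlev _ h0 _ (by linarith) le_rfl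
    _ ≤ MM s := hvleM _ h0 _ (by linarith) le_rfl
  -- limits exist
  obtain ⟨A, hA⟩ : ∃ A, Tendsto MM atTop (nhds A) := by
    rcases tendsto_of_antitone hMM_anti with hbot | h
    · exfalso
      obtain ⟨s, hs⟩ := (hbot.eventually (eventually_lt_atBot (m 0))).exists
      exact absurd (le_trans (hmm_lb s) (hmleM s)) (not_le.2 hs)
    · exact h
  obtain ⟨Bl, hB⟩ : ∃ Bl, Tendsto mm atTop (nhds Bl) := by
    rcases tendsto_of_monotone hmm_mono with htop | h
    · exfalso
      obtain ⟨s, hs⟩ := (htop.eventually (eventually_gt_atTop (MM 0))).exists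
      have h1 : mm s ≤ MM (max s 0) := by
        simpa [hMMdef, max_comm] using hmleM s
      have h2 : MM (max s 0) ≤ MM 0 := by
        by_cases h : 0 ≤ s
        · exact hMM_anti (by simp [max_eq_left h, h])
        · simp [max_eq_right (le_of_not_ge h)]
      exact absurd (le_trans h1 h2) (not_le.2 hs)
    · exact h
  -- the contraction estimate
  set θ := Real.exp (-(3 * lam * τ)) with hθdef
  have hθpos : 0 < θ := Real.exp_pos _
  have hcontr : ∀ s : ℝ, τ ≤ s → M (s + 2 * τ) ≤ M (s - τ) - θ * (M (s - τ) - m s) := by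
    intro s hs
    have hs0 : (0:ℝ) ≤ s := le_trans hτ.le hs
    have hsτ0 : (0:ℝ) ≤ s - τ := by linarith
    obtain ⟨σ, hσmem, hσmin⟩ := isCompact_Icc.exists_isMinOn
      (Set.nonempty_Icc.2 (by linarith : s - τ ≤ s)) (hvc (by linarith))
    have hσ1 : s - τ ≤ σ := hσmem.1
    have hσ2 : σ ≤ s := hσmem.2
    have hvσ : v σ = m s := by
      refine le_antisymm ?_ (hmlev s hs0 σ hσ1 hσ2)
      apply le_csInf (hWne s)
      rintro x ⟨r, hr, rfl⟩
      exact hσmin hr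
    have hσ0 : (0:ℝ) ≤ σ := by linarith
    have hvσleU : v σ ≤ M (s - τ) := hMbound (s - τ) hsτ0 σ (by linarith)
    have key : ∀ r, s + τ ≤ r → r ≤ s + 2 * τ →
        v r ≤ M (s - τ) - θ * (M (s - τ) - v σ) := by
      intro r hr1 hr2
      have hσr : σ ≤ r := by linarith
      have hvoc' := hvoc σ r hσ0 hσr
      have hb : (∫ ρ in σ..r, lam * Real.exp (lam * ρ) * v (ρ - τ))
          ≤ ∫ ρ in σ..r, lam * Real.exp (lam * ρ) * M (s - τ) := by
        apply intervalIntegral.integral_mono_on hσr (hint σ r hσ0 hσr)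
          (((continuous_const.mul hexp_cont).mul continuous_const).intervalIntegrable _ _)
        intro ρ hρ
        have hvρ : v (ρ - τ) ≤ M (s - τ) :=
          hMbound (s - τ) hsτ0 (ρ - τ) (by have := hρ.1; linarith)
        have hexp : 0 ≤ lam * Real.exp (lam * ρ) := by positivity
        exact mul_le_mul_of_nonneg_left hvρ hexp
      rw [hIconst (M (s - τ)) σ r] at hb
      have hEσ : Real.exp (lam * σ) ≥ θ * Real.exp (lam * r) := by
        rw [hθdef, ← Real.exp_add]
        apply Real.exp_le_exp.2
        nlinarith
      have he2 : (0:ℝ) < Real.exp (lam * r) := Real.exp_pos _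
      have hd : 0 ≤ M (s - τ) - v σ := by linarith
      have hstep : Real.exp (lam * r) * v r
          ≤ Real.exp (lam * r) * (M (s - τ) - θ * (M (s - τ) - v σ)) := by
        nlinarith [mul_le_mul_of_nonneg_right hEσ hd]
      exact le_of_mul_le_mul_left hstep he2
    apply csSup_le (hWne _)
    rintro x ⟨r, hr, rfl⟩
    rw [← hvσ]
    refine key r ?_ hr.2
    have := hr.1
    linarith
  -- pass to the limit
  have hlim1 : Tendsto (fun s => MM (s + 2 * τ)) atTop (nhds A) :=
    hA.comp (tendsto_atTop_add_const_right _ _ tendsto_id)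
  have hlim2 : Tendsto (fun s => MM (s - τ)) atTop (nhds A) :=
    hA.comp (tendsto_atTop_add_const_right _ (-τ) tendsto_id)
  have hlimRHS : Tendsto (fun s => MM (s - τ) - θ * (MM (s - τ) - mm s)) atTop
      (nhds (A - θ * (A - Bl))) :=
    hlim2.sub (((hlim2.sub hB).const_mul θ))
  have hALeB : A ≤ Bl := by
    have hev : ∀ᶠ s in atTop, MM (s + 2 * τ) ≤ MM (s - τ) - θ * (MM (s - τ) - mm s) := by
      filter_upwards [eventually_ge_atTop τ] with s hs
      have h1 : max (s + 2 * τ) 0 = s + 2 * τ := max_eq_left (by linarith)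
      have h2 : max (s - τ) 0 = s - τ := max_eq_left (by linarith)
      have h3 : max s 0 = s := max_eq_left (by linarith)
      simp only [hMMdef, hmmdef, h1, h2, h3]
      exact hcontr s hs
    have := le_of_tendsto_of_tendsto hlim1 hlimRHS hev
    nlinarith
  have hBLeA : Bl ≤ A := le_of_tendsto_of_tendsto hB hA (Eventually.of_forall hmleM)
  have hAB : A = Bl := le_antisymm hALeB hBLeA
  refine ⟨A, ?_, ?_⟩
  · have : m 0 ≤ Bl := ge_of_tendsto hB (Eventually.of_forall hmm_lb)
    rw [hAB]; linarith
  · apply tendsto_of_tendsto_of_tendsto_of_le_of_le' (hAB ▸ hB) hA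
    · filter_upwards [eventually_ge_atTop (0:ℝ)] with s hs
      have h3 : max s 0 = s := max_eq_left hs
      simp only [hmmdef, h3]
      exact hmlev s hs s (by linarith) le_rfl
    · filter_upwards [eventually_ge_atTop (0:ℝ)] with s hs
      have h3 : max s 0 = s := max_eq_left hs
      simp only [hMMdef, h3]
      exact hvleM s hs s (by linarith) le_rfl

private lemma barbalat {f Q : ℝ → ℝ} {K S : ℝ} (hK : 0 ≤ K)
    (hf_cont : ContinuousOn f (Set.Ici (1:ℝ)))
    (hf_nonneg : ∀ t, 1 ≤ t → 0 ≤ f t)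
    (hlip : ∀ a b, 1 ≤ a → a ≤ b → f a - K * (b - a) ≤ f b)
    (hQ : ∀ a b, 1 ≤ a → a ≤ b → Q b - Q a = ∫ s in a..b, (f s)^2)
    (hQS : Filter.Tendsto Q Filter.atTop (nhds S))
    (hQle : ∀ t, 1 ≤ t → Q t ≤ S) :
    Filter.Tendsto f Filter.atTop (nhds 0) := by
  rw [Metric.tendsto_atTop]
  intro e he
  set δ := e / (2 * (K + 1)) with hδdef
  have hδpos : 0 < δ := by positivity
  set drop := (e/2)^2 * δ with hdropdef
  have hdrop : 0 < drop := by positivity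
  obtain ⟨T₀, hT₀⟩ := Metric.tendsto_atTop.1 hQS drop hdrop
  refine ⟨max T₀ 1, fun t ht => ?_⟩
  have ht1 : (1:ℝ) ≤ t := le_trans (le_max_right _ _) ht
  by_contra hcon
  have hfte : e ≤ f t := by
    rw [Real.dist_eq, sub_zero, not_lt] at hcon
    calc e ≤ |f t| := hcon
    _ = f t := abs_of_nonneg (hf_nonneg t ht1)
  have hKδ2 : K * δ ≤ e / 2 := by
    have hne : (2 * (K + 1)) ≠ 0 := by positivity
    have hq : δ * (2 * (K + 1)) = e := div_mul_cancel₀ _ hne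
    nlinarith
  have hpt : ∀ s ∈ Set.Icc t (t + δ), e/2 ≤ f s := by
    intro s hs
    have h1 := hlip t s ht1 hs.1
    have h2 : K * (s - t) ≤ K * δ :=
      mul_le_mul_of_nonneg_left (by linarith [hs.2]) hK
    linarith
  have hlow : drop ≤ Q (t + δ) - Q t := by
    rw [hQ t (t+δ) ht1 (by linarith)]
    have hmono : (∫ s in t..(t+δ), (e/2)^2) ≤ ∫ s in t..(t+δ), (f s)^2 := by
      apply intervalIntegral.integral_mono_on (by linarith) intervalIntegrable_const
      · apply ContinuousOn.intervalIntegrable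
        apply (hf_cont.mono ?_).pow 2
        intro r hr
        rw [Set.uIcc_of_le (by linarith : t ≤ t + δ)] at hr
        exact le_trans ht1 hr.1
      · intro s hs
        exact pow_le_pow_left₀ (by positivity) (hpt s hs) 2
    rw [intervalIntegral.integral_const, smul_eq_mul] at hmono
    have : (t + δ - t) = δ := by ring
    rw [this] at hmono
    rw [hdropdef]
    linarith
  have h1 := hT₀ t (le_trans (le_max_left _ _) ht)
  rw [Real.dist_eq] at h1
  have h2 : Q (t + δ) ≤ S := hQle _ (by linarith)
  have h3 : S - drop < Q t := by
    have := (abs_lt.1 h1).1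
    linarith
  linarith

set_option maxHeartbeats 1000000 in
/-- In the two-species competition delay model, if `R₀⁽¹⁾ > 1` and `R₀⁽²⁾ ≤ 1`,
every bounded positive solution converges to the semi-trivial equilibrium
`E₁ = (x₁*, 0)`, where `x₁*` is the positive root of `γ₁e^{-τ₁(μ₁+κ₁x)} = μ₁+κ₁x`. -/
theorem stmt_16 (γ₁ μ₁ κ₁ α₁ τ₁ γ₂ μ₂ κ₂ α₂ τ₂ x₁s : ℝ)
    (hγ₁ : 0 < γ₁) (hμ₁ : 0 < μ₁) (hκ₁ : 0 < κ₁) (hα₁ : 0 < α₁) (hτ₁ : 0 < τ₁)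
    (hγ₂ : 0 < γ₂) (hμ₂ : 0 < μ₂) (hκ₂ : 0 < κ₂) (hα₂ : 0 < α₂) (hτ₂ : 0 < τ₂)
    (hR1 : μ₁ < γ₁ * Real.exp (-μ₁ * τ₁)) (hR2 : γ₂ * Real.exp (-μ₂ * τ₂) ≤ μ₂)
    (hx₁s : 0 < x₁s) (hx₁s_eq : γ₁ * Real.exp (-τ₁ * (μ₁ + κ₁ * x₁s)) = μ₁ + κ₁ * x₁s)
    (x₁ x₂ : ℝ → ℝ)
    (hx₁_cont : ContinuousOn x₁ (Set.Ici (-(max τ₁ τ₂))))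
    (hx₂_cont : ContinuousOn x₂ (Set.Ici (-(max τ₁ τ₂))))
    (hx₁_pos : ∀ t, -(max τ₁ τ₂) ≤ t → 0 < x₁ t)
    (hx₂_pos : ∀ t, -(max τ₁ τ₂) ≤ t → 0 < x₂ t)
    (hx₁_bdd : ∃ B : ℝ, ∀ t, -(max τ₁ τ₂) ≤ t → x₁ t ≤ B)
    (hx₂_bdd : ∃ B : ℝ, ∀ t, -(max τ₁ τ₂) ≤ t → x₂ t ≤ B)
    (hx₁_ode : ∀ t > (0 : ℝ), HasDerivAt x₁
      (γ₁ * x₁ (t - τ₁) *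
          Real.exp (-μ₁ * τ₁ - ∫ s in (t - τ₁)..t, (κ₁ * x₁ s + α₂ * x₂ s))
        - μ₁ * x₁ t - κ₁ * (x₁ t) ^ 2 - α₂ * x₁ t * x₂ t) t)
    (hx₂_ode : ∀ t > (0 : ℝ), HasDerivAt x₂
      (γ₂ * x₂ (t - τ₂) *
          Real.exp (-μ₂ * τ₂ - ∫ s in (t - τ₂)..t, (κ₂ * x₂ s + α₁ * x₁ s))
        - μ₂ * x₂ t - κ₂ * (x₂ t) ^ 2 - α₁ * x₁ t * x₂ t) t) :
    Filter.Tendsto x₁ Filter.atTop (nhds x₁s) ∧ Filter.Tendsto x₂ Filter.atTop (nhds 0) := by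
  have hτ₁le : τ₁ ≤ max τ₁ τ₂ := le_max_left _ _
  have hτ₂le : τ₂ ≤ max τ₁ τ₂ := le_max_right _ _
  set τ := max τ₁ τ₂ with hτdef
  have hτ : 0 < τ := lt_of_lt_of_le hτ₁ hτ₁le
  obtain ⟨B₁, hB₁⟩ := hx₁_bdd
  obtain ⟨B₂, hB₂⟩ := hx₂_bdd
  have hB₁0 : 0 < B₁ := lt_of_lt_of_le (hx₁_pos 0 (by linarith)) (hB₁ 0 (by linarith))
  have hB₂0 : 0 < B₂ := lt_of_lt_of_le (hx₂_pos 0 (by linarith)) (hB₂ 0 (by linarith))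
  -- ## PART 1 : x₂ → 0
  have hx₂lim : Filter.Tendsto x₂ Filter.atTop (nhds 0) := by
    have hx₂int : ∀ a b : ℝ, -τ ≤ a → -τ ≤ b → IntervalIntegrable x₂ volume a b := by
      intro a b ha hb
      apply ContinuousOn.intervalIntegrable
      apply hx₂_cont.mono
      intro r hr
      rcases le_total a b with h | h
      · rw [Set.uIcc_of_le h] at hr; exact le_trans ha hr.1
      · rw [Set.uIcc_of_ge h] at hr; exact le_trans hb hr.1
    set G := fun t : ℝ => ∫ s in (-τ)..t, x₂ s with hGdef
    have hG_deriv : ∀ t : ℝ, -τ < t → HasDerivAt G (x₂ t) t := by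
      intro t ht
      apply intervalIntegral.integral_hasDerivAt_right (hx₂int _ _ le_rfl ht.le)
      · exact (hx₂_cont.mono (fun r (hr : r ∈ Set.Ioi (-τ)) => Set.mem_Ici.2 (le_of_lt hr))).stronglyMeasurableAtFilter
          isOpen_Ioi t ht
      · exact hx₂_cont.continuousAt (Filter.mem_of_superset (Ioi_mem_nhds ht) Set.Ioi_subset_Ici_self)
    set F₂ : ℝ → ℝ := fun t => γ₂ * x₂ (t - τ₂) *
          Real.exp (-μ₂ * τ₂ - ∫ s in (t - τ₂)..t, (κ₂ * x₂ s + α₁ * x₁ s))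
        - μ₂ * x₂ t - κ₂ * (x₂ t) ^ 2 - α₁ * x₁ t * x₂ t with hF₂def
    have hx₂ode' : ∀ t : ℝ, 0 < t → HasDerivAt x₂ (F₂ t) t := fun t ht => hx₂_ode t ht
    have hIpos : ∀ t : ℝ, 0 < t → 0 ≤ ∫ s in (t - τ₂)..t, (κ₂ * x₂ s + α₁ * x₁ s) := by
      intro t ht
      apply intervalIntegral.integral_nonneg (by linarith)
      intro u hu
      have hu1 : -τ ≤ u := by have := hu.1; linarith
      have h1 := hx₁_pos u hu1
      have h2 := hx₂_pos u hu1
      have := mul_pos hκ₂ h2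
      have := mul_pos hα₁ h1
      linarith
    have hF₂_ub : ∀ t : ℝ, 0 < t → F₂ t ≤ μ₂ * x₂ (t - τ₂) - μ₂ * x₂ t - κ₂ * (x₂ t) ^ 2 := by
      intro t ht
      have hIt := hIpos t ht
      have hx₂τ : 0 < x₂ (t - τ₂) := hx₂_pos _ (by linarith)
      have h2 : Real.exp (-μ₂ * τ₂ - ∫ s in (t - τ₂)..t, (κ₂ * x₂ s + α₁ * x₁ s))
          ≤ Real.exp (-μ₂ * τ₂) := Real.exp_le_exp.2 (by linarith)
      have hterm : γ₂ * x₂ (t - τ₂) *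
          Real.exp (-μ₂ * τ₂ - ∫ s in (t - τ₂)..t, (κ₂ * x₂ s + α₁ * x₁ s))
          ≤ μ₂ * x₂ (t - τ₂) := by
        calc γ₂ * x₂ (t - τ₂) * Real.exp (-μ₂ * τ₂ - ∫ s in (t - τ₂)..t, (κ₂ * x₂ s + α₁ * x₁ s))
            ≤ γ₂ * x₂ (t - τ₂) * Real.exp (-μ₂ * τ₂) := by
              apply mul_le_mul_of_nonneg_left h2 (by positivity)
        _ = (γ₂ * Real.exp (-μ₂ * τ₂)) * x₂ (t - τ₂) := by ring
        _ ≤ μ₂ * x₂ (t - τ₂) := mul_le_mul_of_nonneg_right hR2 hx₂τ.le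
      have hα : 0 ≤ α₁ * x₁ t * x₂ t := by
        have h1 := hx₁_pos t (by linarith)
        have h2 := hx₂_pos t (by linarith)
        positivity
      simp only [hF₂def]
      linarith
    set K := γ₂ * B₂ + (μ₂ * B₂ + κ₂ * B₂ ^ 2 + α₁ * (B₁ * B₂)) with hKdef
    have hK0 : 0 ≤ K := by positivity
    have hF₂_abs : ∀ t : ℝ, 0 < t → |F₂ t| ≤ K := by
      intro t ht
      have hIt := hIpos t ht
      have hx₂τ : 0 < x₂ (t - τ₂) := hx₂_pos _ (by linarith)
      have hx₂τB : x₂ (t - τ₂) ≤ B₂ := hB₂ _ (by linarith)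
      have hx₂t : 0 < x₂ t := hx₂_pos t (by linarith)
      have hx₂tB : x₂ t ≤ B₂ := hB₂ t (by linarith)
      have hx₁t : 0 < x₁ t := hx₁_pos t (by linarith)
      have hx₁tB : x₁ t ≤ B₁ := hB₁ t (by linarith)
      have hE1 : Real.exp (-μ₂ * τ₂ - ∫ s in (t - τ₂)..t, (κ₂ * x₂ s + α₁ * x₁ s)) ≤ 1 := by
        rw [← Real.exp_zero]
        apply Real.exp_le_exp.2
        nlinarith [mul_pos hμ₂ hτ₂]
      have hE0 : 0 < Real.exp (-μ₂ * τ₂ - ∫ s in (t - τ₂)..t, (κ₂ * x₂ s + α₁ * x₁ s)) :=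
        Real.exp_pos _
      have hp0 : 0 ≤ γ₂ * B₂ := by positivity
      have hp1 : μ₂ * x₂ t ≤ μ₂ * B₂ := mul_le_mul_of_nonneg_left hx₂tB hμ₂.le
      have hp2 : κ₂ * (x₂ t) ^ 2 ≤ κ₂ * B₂ ^ 2 :=
        mul_le_mul_of_nonneg_left (by nlinarith) hκ₂.le
      have hp3 : α₁ * x₁ t * x₂ t ≤ α₁ * (B₁ * B₂) := by
        have : x₁ t * x₂ t ≤ B₁ * B₂ := mul_le_mul hx₁tB hx₂tB hx₂t.le hB₁0.le
        nlinarith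
      have hp1' : 0 < μ₂ * x₂ t := mul_pos hμ₂ hx₂t
      have hp2' : 0 < κ₂ * (x₂ t) ^ 2 := by positivity
      have hp3' : 0 < α₁ * x₁ t * x₂ t := by positivity
      rw [abs_le]
      simp only [hF₂def]
      constructor
      · have h1 : 0 ≤ γ₂ * x₂ (t - τ₂) *
            Real.exp (-μ₂ * τ₂ - ∫ s in (t - τ₂)..t, (κ₂ * x₂ s + α₁ * x₁ s)) := by positivity
        rw [hKdef]
        linarith
      · have h1 : γ₂ * x₂ (t - τ₂) *
            Real.exp (-μ₂ * τ₂ - ∫ s in (t - τ₂)..t, (κ₂ * x₂ s + α₁ * x₁ s)) ≤ γ₂ * B₂ := by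
          have h2 : γ₂ * x₂ (t - τ₂) ≤ γ₂ * B₂ := mul_le_mul_of_nonneg_left hx₂τB hγ₂.le
          calc γ₂ * x₂ (t - τ₂) *
              Real.exp (-μ₂ * τ₂ - ∫ s in (t - τ₂)..t, (κ₂ * x₂ s + α₁ * x₁ s))
              ≤ γ₂ * B₂ * 1 := mul_le_mul h2 hE1 hE0.le (by positivity)
          _ = γ₂ * B₂ := mul_one _
        rw [hKdef]
        linarith
    have hx₂lip : ∀ a b : ℝ, 1 ≤ a → a ≤ b → x₂ a - K * (b - a) ≤ x₂ b := by
      intro a b ha hab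
      have hmv := Convex.norm_image_sub_le_of_norm_hasDerivWithin_le
        (f := x₂) (f' := F₂) (s := Set.Icc a b) (C := K)
        (fun r hr => (hx₂ode' r (by linarith [hr.1])).hasDerivWithinAt)
        (fun r hr => by rw [Real.norm_eq_abs]; exact hF₂_abs r (by linarith [hr.1]))
        (convex_Icc a b) (Set.left_mem_Icc.2 hab) (Set.right_mem_Icc.2 hab)
      rw [Real.norm_eq_abs, Real.norm_eq_abs] at hmv
      have h1 := (abs_le.1 hmv).1
      rw [abs_of_nonneg (by linarith : (0:ℝ) ≤ b - a)] at h1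
      linarith
    set y := fun t : ℝ => x₂ t + μ₂ * (G t - G (t - τ₂)) with hydef
    have hy_deriv : ∀ t : ℝ, 0 < t →
        HasDerivAt y (F₂ t + μ₂ * (x₂ t - x₂ (t - τ₂))) t := by
      intro t ht
      have h1 := hx₂ode' t ht
      have h2 := hG_deriv t (by linarith)
      have h3 : HasDerivAt (fun r => G (r - τ₂)) (x₂ (t - τ₂)) t := by
        have := (hG_deriv (t - τ₂) (by linarith)).comp t ((hasDerivAt_id t).sub_const τ₂)
        exact this.congr_deriv (by ring)
      have := h1.add ((h2.sub h3).const_mul μ₂)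
      exact this
    have hGdiff : ∀ t : ℝ, 0 < t → G t - G (t - τ₂) = ∫ s in (t - τ₂)..t, x₂ s := by
      intro t ht
      have := intervalIntegral.integral_add_adjacent_intervals
        (hx₂int (-τ) (t - τ₂) le_rfl (by linarith)) (hx₂int (t - τ₂) t (by linarith) (by linarith))
      simp only [hGdef]
      linarith
    have hy_nonneg : ∀ t : ℝ, 0 < t → 0 ≤ y t := by
      intro t ht
      have h2 := hx₂_pos t (by linarith)
      have h3 : 0 ≤ G t - G (t - τ₂) := by
        rw [hGdiff t ht]
        apply intervalIntegral.integral_nonneg (by linarith)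
        intro u hu
        exact (hx₂_pos u (by have := hu.1; linarith)).le
      have := mul_nonneg hμ₂.le h3
      simp only [hydef]
      linarith
    set Q := fun t : ℝ => ∫ s in (1:ℝ)..t, (x₂ s) ^ 2 with hQdef
    have hx₂sqint : ∀ a b : ℝ, -τ ≤ a → -τ ≤ b →
        IntervalIntegrable (fun s => (x₂ s) ^ 2) volume a b := by
      intro a b ha hb
      apply ContinuousOn.intervalIntegrable
      apply ContinuousOn.pow
      apply hx₂_cont.mono
      intro r hr
      rcases le_total a b with h | h
      · rw [Set.uIcc_of_le h] at hr; exact le_trans ha hr.1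
      · rw [Set.uIcc_of_ge h] at hr; exact le_trans hb hr.1
    have hQ_deriv : ∀ t : ℝ, 0 < t → HasDerivAt Q ((x₂ t) ^ 2) t := by
      intro t ht
      apply intervalIntegral.integral_hasDerivAt_right
        (hx₂sqint 1 t (by linarith) (by linarith))
      · exact (((hx₂_cont.mono (fun r (hr : r ∈ Set.Ioi (-τ)) => Set.mem_Ici.2 (le_of_lt hr)))).pow 2).stronglyMeasurableAtFilter
          isOpen_Ioi t (by simp; linarith)
      · exact (hx₂_cont.continuousAt
          (Filter.mem_of_superset (Ioi_mem_nhds (by linarith : -τ < t)) Set.Ioi_subset_Ici_self)).pow 2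
    have hQdiff : ∀ a b : ℝ, 1 ≤ a → a ≤ b → Q b - Q a = ∫ s in a..b, (x₂ s) ^ 2 := by
      intro a b ha hab
      have := intervalIntegral.integral_add_adjacent_intervals
        (hx₂sqint 1 a (by linarith) (by linarith)) (hx₂sqint a b (by linarith) (by linarith))
      simp only [hQdef]
      linarith
    -- z = y + κ₂ Q is nonincreasing on [1, T]
    have hQbdd : ∀ t : ℝ, 1 ≤ t → Q t ≤ y 1 / κ₂ := by
      intro t ht
      have hanti : AntitoneOn (fun r => y r + κ₂ * Q r) (Set.Icc 1 t) := by
        apply antitoneOn_of_deriv_nonpos (convex_Icc 1 t)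
        · intro r hr
          exact (((hy_deriv r (by linarith [hr.1])).add
            ((hQ_deriv r (by linarith [hr.1])).const_mul κ₂))).continuousAt.continuousWithinAt
        · intro r hr
          rw [interior_Icc] at hr
          exact (((hy_deriv r (by linarith [hr.1])).add
            ((hQ_deriv r (by linarith [hr.1])).const_mul κ₂))).differentiableAt.differentiableWithinAt
        · intro r hr
          rw [interior_Icc] at hr
          have hr0 : (0:ℝ) < r := by linarith [hr.1]
          rw [HasDerivAt.deriv (f := fun r => y r + κ₂ * Q r) ((hy_deriv r hr0).add ((hQ_deriv r hr0).const_mul κ₂))]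
          have := hF₂_ub r hr0
          linarith
      have h1 := hanti (Set.left_mem_Icc.2 ht) (Set.right_mem_Icc.2 ht) ht
      have hQ1 : Q 1 = 0 := intervalIntegral.integral_same
      have h2 := hy_nonneg t (by linarith)
      rw [le_div_iff₀ hκ₂]
      simp only [hQ1, mul_zero, add_zero] at h1
      nlinarith
    set QQ := fun t : ℝ => Q (max t 1) with hQQdef
    have hQQmono : Monotone QQ := by
      intro a b hab
      have h1 : (1:ℝ) ≤ max a 1 := le_max_right _ _
      have h2 : max a 1 ≤ max b 1 := max_le_max hab le_rfl
      have := hQdiff (max a 1) (max b 1) h1 h2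
      have h3 : 0 ≤ ∫ s in (max a 1)..(max b 1), (x₂ s) ^ 2 :=
        intervalIntegral.integral_nonneg h2 (fun u _ => sq_nonneg _)
      simp only [hQQdef]
      linarith
    obtain ⟨S, hS⟩ : ∃ S, Tendsto QQ atTop (nhds S) := by
      rcases tendsto_of_monotone hQQmono with htop | h
      · exfalso
        obtain ⟨s, hs⟩ := (htop.eventually (eventually_gt_atTop (y 1 / κ₂))).exists
        exact absurd (hQbdd (max s 1) (le_max_right _ _)) (not_le.2 hs)
      · exact h
    have hQS : Tendsto Q atTop (nhds S) := by
      apply hS.congr'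
      filter_upwards [eventually_ge_atTop (1:ℝ)] with t ht
      simp only [hQQdef, max_eq_left ht]
    have hQle : ∀ t : ℝ, 1 ≤ t → Q t ≤ S := by
      intro t ht
      have := hQQmono.ge_of_tendsto hS t
      simpa only [hQQdef, max_eq_left ht] using this
    exact barbalat hK0 (hx₂_cont.mono (fun r hr => by simp at hr ⊢; linarith))
      (fun t ht => (hx₂_pos t (by linarith)).le) hx₂lip hQdiff hQS hQle
  refine ⟨?_, hx₂lim⟩
  -- ## PART 2 : x₁ → x₁s
  set D₁ : ℝ → ℝ := fun s => μ₁ + (κ₁ * x₁ s + α₂ * x₂ s) with hD₁def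
  have hD₁cont : ContinuousOn D₁ (Set.Ici (-τ)) :=
    continuousOn_const.add ((continuousOn_const.mul hx₁_cont).add
      (continuousOn_const.mul hx₂_cont))
  have hD₁int : ∀ a b : ℝ, -τ ≤ a → -τ ≤ b → IntervalIntegrable D₁ volume a b := by
    intro a b ha hb
    apply ContinuousOn.intervalIntegrable
    apply hD₁cont.mono
    intro r hr
    rcases le_total a b with h | h
    · rw [Set.uIcc_of_le h] at hr; exact le_trans ha hr.1
    · rw [Set.uIcc_of_ge h] at hr; exact le_trans hb hr.1
  have hg₁int : ∀ a b : ℝ, -τ ≤ a → -τ ≤ b →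
      IntervalIntegrable (fun s => κ₁ * x₁ s + α₂ * x₂ s) volume a b := by
    intro a b ha hb
    apply ContinuousOn.intervalIntegrable
    apply ContinuousOn.mono ((continuousOn_const.mul hx₁_cont).add
      (continuousOn_const.mul hx₂_cont))
    intro r hr
    rcases le_total a b with h | h
    · rw [Set.uIcc_of_le h] at hr; exact le_trans ha hr.1
    · rw [Set.uIcc_of_ge h] at hr; exact le_trans hb hr.1
  set MD := μ₁ + (κ₁ * B₁ + α₂ * B₂) with hMDdef
  have hMD0 : 0 < MD := by positivity
  have hD₁bound : ∀ s, -τ ≤ s → ‖D₁ s‖ ≤ MD := by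
    intro s hs
    have h1 := hx₁_pos s hs
    have h2 := hx₂_pos s hs
    have h3 := hB₁ s hs
    have h4 := hB₂ s hs
    have p1 : κ₁ * x₁ s ≤ κ₁ * B₁ := mul_le_mul_of_nonneg_left h3 hκ₁.le
    have p2 : α₂ * x₂ s ≤ α₂ * B₂ := mul_le_mul_of_nonneg_left h4 hα₂.le
    have p1' : 0 < κ₁ * x₁ s := mul_pos hκ₁ h1
    have p2' : 0 < α₂ * x₂ s := mul_pos hα₂ h2
    rw [Real.norm_eq_abs, abs_le]
    simp only [hD₁def, hMDdef]
    constructor <;> linarith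
  set P := fun t : ℝ => ∫ s in (-τ)..t, D₁ s with hPdef
  have hP_deriv : ∀ t : ℝ, -τ < t → HasDerivAt P (D₁ t) t := by
    intro t ht
    apply intervalIntegral.integral_hasDerivAt_right (hD₁int _ _ le_rfl ht.le)
    · exact (hD₁cont.mono (fun r (hr : r ∈ Set.Ioi (-τ)) =>
        Set.mem_Ici.2 (le_of_lt hr))).stronglyMeasurableAtFilter isOpen_Ioi t ht
    · exact hD₁cont.continuousAt
        (Filter.mem_of_superset (Ioi_mem_nhds ht) Set.Ioi_subset_Ici_self)
  have hPdiff : ∀ a b : ℝ, -τ ≤ a → -τ ≤ b → P b - P a = ∫ s in a..b, D₁ s := by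
    intro a b ha hb
    have := intervalIntegral.integral_add_adjacent_intervals
      (hD₁int (-τ) a le_rfl ha) (hD₁int a b ha hb)
    simp only [hPdef]
    linarith
  have hP_cont : ContinuousOn P (Set.Ici (-τ)) := by
    rw [Metric.continuousOn_iff]
    intro b hb e he
    refine ⟨e / (MD + 1), by positivity, fun a ha hab => ?_⟩
    have h1 : |P a - P b| ≤ MD * |a - b| := by
      rw [hPdiff b a hb ha, ← Real.norm_eq_abs]
      apply intervalIntegral.norm_integral_le_of_norm_le_const
      intro x hx
      apply hD₁bound x
      have := hx.1
      rcases le_total b a with h | h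
      · rw [min_eq_left h] at this; exact le_trans hb (le_of_lt this)
      · rw [min_eq_right h] at this; exact le_trans ha (le_of_lt this)
    rw [Real.dist_eq] at hab ⊢
    have h2 : MD * |a - b| ≤ MD * (e / (MD + 1)) :=
      mul_le_mul_of_nonneg_left hab.le hMD0.le
    have hq : e / (MD + 1) * (MD + 1) = e := div_mul_cancel₀ _ (by positivity)
    nlinarith [abs_nonneg (a - b)]
  set lam := μ₁ + κ₁ * x₁s with hlamdef
  have hlam0 : 0 < lam := by positivity
  have hlam_eq : γ₁ * Real.exp (-(lam * τ₁)) = lam := by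
    have h : -(lam * τ₁) = -τ₁ * (μ₁ + κ₁ * x₁s) := by rw [hlamdef]; ring
    rw [h, hx₁s_eq, hlamdef]
  have hγ₁eq : γ₁ = lam * Real.exp (lam * τ₁) := by
    have h := hlam_eq
    rw [Real.exp_neg] at h
    field_simp at h
    linarith
  set v := fun t : ℝ => x₁ t * Real.exp (P t - lam * t) with hvdef
  have hexp_rw : ∀ t : ℝ, 0 < t →
      -μ₁ * τ₁ - (∫ s in (t - τ₁)..t, (κ₁ * x₁ s + α₂ * x₂ s)) = -(P t - P (t - τ₁)) := by
    intro t ht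
    rw [hPdiff (t - τ₁) t (by linarith) (by linarith)]
    have h2 : (∫ s in (t - τ₁)..t, D₁ s)
        = (∫ _s in (t - τ₁)..t, μ₁) + ∫ s in (t - τ₁)..t, (κ₁ * x₁ s + α₂ * x₂ s) := by
      rw [← intervalIntegral.integral_add intervalIntegrable_const
        (hg₁int (t - τ₁) t (by linarith) (by linarith))]
    rw [h2, intervalIntegral.integral_const, smul_eq_mul]
    ring
  have hv_cont : ContinuousOn v (Set.Ici (-τ₁)) := by
    have hsub : Set.Ici (-τ₁) ⊆ Set.Ici (-τ) := Set.Ici_subset_Ici.2 (by linarith)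
    exact (hx₁_cont.mono hsub).mul (Real.continuous_exp.comp_continuousOn
      ((hP_cont.mono hsub).sub (continuous_const.mul continuous_id).continuousOn))
  have hv_pos : ∀ t : ℝ, -τ₁ ≤ t → 0 < v t := by
    intro t ht
    have h1 := hx₁_pos t (by linarith)
    simp only [hvdef]
    positivity
  have hv_ode : ∀ t : ℝ, 0 < t → HasDerivAt v (lam * (v (t - τ₁) - v t)) t := by
    intro t ht
    have hP' := hP_deriv t (by linarith)
    have hLin : HasDerivAt (fun r : ℝ => P r - lam * r) (D₁ t - lam) t := by
      have := hP'.sub ((hasDerivAt_id t).const_mul lam)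
      exact this.congr_deriv (by ring)
    have hE : HasDerivAt (fun r => Real.exp (P r - lam * r))
        (Real.exp (P t - lam * t) * (D₁ t - lam)) t := (Real.hasDerivAt_exp _).comp t hLin
    have hprod := (hx₁_ode t ht).mul hE
    have hgoal : HasDerivAt v
        ((γ₁ * x₁ (t - τ₁) *
            Real.exp (-μ₁ * τ₁ - ∫ s in (t - τ₁)..t, (κ₁ * x₁ s + α₂ * x₂ s))
          - μ₁ * x₁ t - κ₁ * (x₁ t) ^ 2 - α₂ * x₁ t * x₂ t) * Real.exp (P t - lam * t)
          + x₁ t * (Real.exp (P t - lam * t) * (D₁ t - lam))) t := hprod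
    convert hgoal using 1
    rw [hexp_rw t ht]
    have e3 : γ₁ * (Real.exp (-(P t - P (t - τ₁))) * Real.exp (P t - lam * t))
        = lam * Real.exp (P (t - τ₁) - lam * (t - τ₁)) := by
      rw [hγ₁eq]
      rw [show Real.exp (-(P t - P (t - τ₁))) * Real.exp (P t - lam * t)
          = Real.exp (P (t - τ₁) - lam * t) from by rw [← Real.exp_add]; congr 1; ring]
      rw [show P (t - τ₁) - lam * (t - τ₁) = lam * τ₁ + (P (t - τ₁) - lam * t) from by ring,
        Real.exp_add]
      ring
    simp only [hvdef, hD₁def]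
    linear_combination (-(x₁ (t - τ₁))) * e3
  obtain ⟨c, hc0, hvlim⟩ := delay_consensus hlam0 hτ₁ v hv_cont hv_pos hv_ode
  set eps := fun t : ℝ => lam * (v (t - τ₁) - v t) / v t - α₂ * x₂ t with hepsdef
  have heps : Tendsto eps atTop (nhds 0) := by
    have hshift : Tendsto (fun t => v (t - τ₁)) atTop (nhds c) := by
      have h := hvlim.comp (tendsto_atTop_add_const_right atTop (-τ₁) tendsto_id)
      simpa [sub_eq_add_neg, Function.comp_def] using h
    have h1 : Tendsto (fun t => lam * (v (t - τ₁) - v t) / v t) atTop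
        (nhds (lam * (c - c) / c)) :=
      Tendsto.div ((hshift.sub hvlim).const_mul lam) hvlim hc0.ne'
    have h2 := h1.sub (hx₂lim.const_mul α₂)
    simp only [sub_self, mul_zero, zero_div, sub_zero] at h2
    exact h2
  have hode' : ∀ t : ℝ, 1 ≤ t → HasDerivAt x₁ (x₁ t * (κ₁ * (x₁s - x₁ t) + eps t)) t := by
    intro t ht
    have ht0 : (0:ℝ) < t := by linarith
    have h1 := hx₁_ode t ht0
    have hx₁tp := hx₁_pos t (by linarith)
    have hvt : v t = x₁ t * Real.exp (P t - lam * t) := rfl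
    have hvτ : v (t - τ₁) = x₁ (t - τ₁) * Real.exp (P (t - τ₁) - lam * (t - τ₁)) := rfl
    have hvtpos : 0 < v t := hv_pos t (by linarith)
    have e4 : lam * Real.exp (P (t - τ₁) - lam * (t - τ₁)) * Real.exp (-(P t - lam * t))
        = γ₁ * Real.exp (-(P t - P (t - τ₁))) := by
      have comb : ∀ a b : ℝ, Real.exp a * Real.exp b = Real.exp (a + b) :=
        fun a b => (Real.exp_add a b).symm
      calc lam * Real.exp (P (t - τ₁) - lam * (t - τ₁)) * Real.exp (-(P t - lam * t))
          = lam * Real.exp (P (t - τ₁) - lam * (t - τ₁) + -(P t - lam * t)) := by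
            rw [mul_assoc, comb]
        _ = lam * (Real.exp (lam * τ₁) * Real.exp (-(P t - P (t - τ₁)))) := by
            rw [comb]
            congr 1
            ring
        _ = γ₁ * Real.exp (-(P t - P (t - τ₁))) := by rw [hγ₁eq]; ring
    have hEE : Real.exp (P t - lam * t) * Real.exp (-(P t - lam * t)) = 1 := by
      rw [← Real.exp_add]
      simp
    have hd : x₁ t / v t = Real.exp (-(P t - lam * t)) := by
      have hEne : Real.exp (P t - lam * t) ≠ 0 := (Real.exp_pos _).ne'
      rw [hvt, Real.exp_neg]
      field_simp
    have hkey : x₁ t * eps t = γ₁ * x₁ (t - τ₁) * Real.exp (-(P t - P (t - τ₁)))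
        - lam * x₁ t - α₂ * x₁ t * x₂ t := by
      simp only [hepsdef]
      rw [mul_sub]
      congr 1
      · calc x₁ t * (lam * (v (t - τ₁) - v t) / v t)
            = lam * (v (t - τ₁) - v t) * (x₁ t / v t) := by ring
        _ = lam * (v (t - τ₁) - v t) * Real.exp (-(P t - lam * t)) := by rw [hd]
        _ = lam * v (t - τ₁) * Real.exp (-(P t - lam * t))
            - lam * (x₁ t * (Real.exp (P t - lam * t) * Real.exp (-(P t - lam * t)))) := by
              rw [hvt]; ring
        _ = γ₁ * x₁ (t - τ₁) * Real.exp (-(P t - P (t - τ₁))) - lam * x₁ t := by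
              rw [hEE, hvτ, mul_one]
              rw [show lam * (x₁ (t - τ₁) * Real.exp (P (t - τ₁) - lam * (t - τ₁)))
                  * Real.exp (-(P t - lam * t))
                  = x₁ (t - τ₁) * (lam * Real.exp (P (t - τ₁) - lam * (t - τ₁))
                    * Real.exp (-(P t - lam * t))) by ring, e4]
              ring
      · ring
    have hlam' : κ₁ * x₁s = lam - μ₁ := by rw [hlamdef]; ring
    have heq : γ₁ * x₁ (t - τ₁) *
          Real.exp (-μ₁ * τ₁ - ∫ s in (t - τ₁)..t, (κ₁ * x₁ s + α₂ * x₂ s))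
        - μ₁ * x₁ t - κ₁ * (x₁ t) ^ 2 - α₂ * x₁ t * x₂ t
        = x₁ t * (κ₁ * (x₁s - x₁ t) + eps t) := by
      rw [hexp_rw t ht0]
      linear_combination -hkey - x₁ t * hlam'
    exact heq ▸ h1
  exact scalar_converge hκ₁ hx₁s x₁ eps (fun t ht => hx₁_pos t (by linarith)) hode' heps
end

section
/- Let γ > μ > 0 and κ > 0. For τ ≥ 0 with γ·e^{−μτ} > μ, let x*(τ) denote the unique positive root of γ·e^{−τ(μ + κx)} = μ + κx. Then x*(τ) is strictly decreasing in τ: if 0 ≤ τ₁ < τ₂ and γ·e^{−μτ₂} > μ, then x*(τ₁) > x*(τ₂). -/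
/-- The delay reduced carrying capacity `x*(τ)`, the positive root of
`γ e^{-τ(μ+κx)} = μ+κx`, is strictly decreasing in the delay `τ`. -/
theorem stmt_17 (γ μ κ : ℝ) (hγμ : μ < γ) (hμ : 0 < μ) (hκ : 0 < κ)
    (τ₁ τ₂ x₁ x₂ : ℝ) (hτ₁ : 0 ≤ τ₁) (hτ : τ₁ < τ₂)
    (hR2 : μ < γ * Real.exp (-μ * τ₂))
    (hx₁ : 0 < x₁) (hx₁_eq : γ * Real.exp (-τ₁ * (μ + κ * x₁)) = μ + κ * x₁)
    (hx₂ : 0 < x₂) (hx₂_eq : γ * Real.exp (-τ₂ * (μ + κ * x₂)) = μ + κ * x₂) :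
    x₂ < x₁ := by
  by_contra h
  push_neg at h
  have hγ : 0 < γ := hμ.trans hγμ
  have ha : 0 < μ + κ * x₁ := by positivity
  have hτ₂ : 0 < τ₂ := hτ₁.trans_lt hτ
  have hlt : -τ₂ * (μ + κ * x₂) < -τ₁ * (μ + κ * x₁) := by nlinarith [mul_lt_mul_of_pos_right hτ ha, mul_le_mul_of_nonneg_left (mul_le_mul_of_nonneg_left h hκ.le) hτ₂.le]
  have := mul_lt_mul_of_pos_left (Real.exp_lt_exp.mpr hlt) hγ
  rw [hx₁_eq, hx₂_eq] at this
  nlinarith [mul_lt_mul_of_pos_right hτ ha, mul_le_mul_of_nonneg_left (mul_le_mul_of_nonneg_left h hκ.le) hτ₂.le]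
end

section
/- Let γ₀ > μ > 0 and c > 0, and let τ_H > 0 satisfy γ₀·(1 + cτ_H)·e^{−μτ_H} = μ with γ₀(1 + cτ)e^{−μτ} > μ for τ ∈ [0, τ_H). Let x* : [0, τ_H] → ℝ be a continuous function with x*(τ) ≥ 0 and γ₀·(1 + cτ)·e^{−τ(μ + x*(τ))} = μ + x*(τ) for all τ ∈ [0, τ_H]. Then x*(0) = γ₀ − μ, x*(τ_H) = 0, and if c > γ₀ there exists τ* ∈ (0, τ_H) such that x*(τ*) ≥ x*(τ) for all τ ∈ [0, τ_H] and x*(τ*) > x*(0). -/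
/-- Adaptive dynamics with the trade-off `γ(τ) = γ₀(1+cτ)`: the delay reduced carrying
capacity `x*(τ)`, defined by `γ₀(1+cτ)e^{-τ(μ+x*(τ))} = μ + x*(τ)` on `[0, τ_H]`,
satisfies `x*(0) = γ₀ - μ` and `x*(τ_H) = 0`; and if `c > γ₀` there is an interior
maximizer `τ* ∈ (0, τ_H)` with `x*(τ*) > x*(0)` (an evolutionarily stable strategy). -/
theorem stmt_19 (γ₀ μ c τH : ℝ) (hγμ : μ < γ₀) (hμ : 0 < μ) (hc : 0 < c) (hτH : 0 < τH)
    (hτH_eq : γ₀ * (1 + c * τH) * Real.exp (-μ * τH) = μ)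
    (hτH_lt : ∀ τ : ℝ, 0 ≤ τ → τ < τH → μ < γ₀ * (1 + c * τ) * Real.exp (-μ * τ))
    (xs : ℝ → ℝ)
    (hxs_cont : ContinuousOn xs (Set.Icc 0 τH))
    (hxs_nonneg : ∀ τ ∈ Set.Icc (0 : ℝ) τH, 0 ≤ xs τ)
    (hxs_eq : ∀ τ ∈ Set.Icc (0 : ℝ) τH,
      γ₀ * (1 + c * τ) * Real.exp (-τ * (μ + xs τ)) = μ + xs τ) :
    xs 0 = γ₀ - μ ∧ xs τH = 0 ∧
      (γ₀ < c → ∃ τs ∈ Set.Ioo (0 : ℝ) τH,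
        (∀ τ ∈ Set.Icc (0 : ℝ) τH, xs τ ≤ xs τs) ∧ xs 0 < xs τs) := by
  have h0mem : (0 : ℝ) ∈ Set.Icc (0 : ℝ) τH := ⟨le_refl 0, hτH.le⟩
  have hHmem : τH ∈ Set.Icc (0 : ℝ) τH := ⟨hτH.le, le_refl _⟩
  -- Part 1
  have h0 : xs 0 = γ₀ - μ := by
    have := hxs_eq 0 h0mem
    simp at this
    linarith
  -- Part 2
  have hH : xs τH = 0 := by
    have heq := hxs_eq τH hHmem
    have hx := hxs_nonneg τH hHmem
    have hsplit : (-τH * (μ + xs τH)) = (-μ * τH) + (-τH * xs τH) := by ring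
    rw [hsplit, Real.exp_add, ← mul_assoc, hτH_eq] at heq
    have hle : Real.exp (-τH * xs τH) ≤ 1 := by
      apply Real.exp_le_one_iff.mpr
      have : 0 ≤ τH * xs τH := mul_nonneg hτH.le hx
      linarith
    nlinarith [Real.exp_pos (-τH * xs τH)]
  refine ⟨h0, hH, fun hcγ => ?_⟩
  -- Part 3 : pick a small τ₀ where xs τ₀ > γ₀ - μ
  set τ₀ : ℝ := min (τH / 2) ((c - γ₀) / (2 * c * γ₀)) with hτ₀def
  have hγ₀pos : 0 < γ₀ := lt_trans hμ hγμ
  have hτ₀pos : 0 < τ₀ := lt_min (by linarith) (div_pos (by linarith) (by positivity))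
  have hτ₀ltH : τ₀ < τH := lt_of_le_of_lt (min_le_left _ _) (by linarith)
  have hτ₀mem : τ₀ ∈ Set.Icc (0 : ℝ) τH := ⟨hτ₀pos.le, hτ₀ltH.le⟩
  have hτ₀small : c * γ₀ * τ₀ < c - γ₀ := by
    have h1 : τ₀ ≤ (c - γ₀) / (2 * c * γ₀) := min_le_right _ _
    rw [le_div_iff₀ (by positivity)] at h1
    nlinarith
  have hγτ₀lt1 : γ₀ * τ₀ < 1 := by
    nlinarith
  -- key : (1 + c τ₀) exp(-γ₀ τ₀) > 1
  have hkey : 1 < (1 + c * τ₀) * Real.exp (-(γ₀ * τ₀)) := by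
    have hexp : 1 - γ₀ * τ₀ ≤ Real.exp (-(γ₀ * τ₀)) := by
      have := Real.add_one_le_exp (-(γ₀ * τ₀))
      linarith
    have hprod : 1 < (1 + c * τ₀) * (1 - γ₀ * τ₀) := by nlinarith
    nlinarith [mul_pos hc hτ₀pos]
  have hτ₀gt : γ₀ - μ < xs τ₀ := by
    by_contra hcon
    push_neg at hcon
    have heq := hxs_eq τ₀ hτ₀mem
    have hub : μ + xs τ₀ ≤ γ₀ := by linarith
    have hexpmono : Real.exp (-(γ₀ * τ₀)) ≤ Real.exp (-τ₀ * (μ + xs τ₀)) := by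
      apply Real.exp_le_exp.mpr
      nlinarith
    have : γ₀ < γ₀ * (1 + c * τ₀) * Real.exp (-τ₀ * (μ + xs τ₀)) := by
      calc γ₀ = γ₀ * 1 := (mul_one γ₀).symm
        _ < γ₀ * ((1 + c * τ₀) * Real.exp (-(γ₀ * τ₀))) := by
            exact (mul_lt_mul_iff_right₀ hγ₀pos).mpr hkey
        _ ≤ γ₀ * ((1 + c * τ₀) * Real.exp (-τ₀ * (μ + xs τ₀))) := by
            apply mul_le_mul_of_nonneg_left _ hγ₀pos.le
            apply mul_le_mul_of_nonneg_left hexpmono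
            nlinarith
        _ = γ₀ * (1 + c * τ₀) * Real.exp (-τ₀ * (μ + xs τ₀)) := by ring
    rw [heq] at this
    linarith
  -- maximizer
  obtain ⟨τs, hτsmem, hmax⟩ :=
    isCompact_Icc.exists_isMaxOn (Set.nonempty_Icc.mpr hτH.le) hxs_cont
  have hmax' : ∀ τ ∈ Set.Icc (0 : ℝ) τH, xs τ ≤ xs τs := fun τ hτ => hmax hτ
  have hbig : γ₀ - μ < xs τs := lt_of_lt_of_le hτ₀gt (hmax' τ₀ hτ₀mem)
  have hne0 : τs ≠ 0 := by
    intro h; rw [h, h0] at hbig; exact lt_irrefl _ hbig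
  have hneH : τs ≠ τH := by
    intro h; rw [h, hH] at hbig; linarith
  refine ⟨τs, ⟨lt_of_le_of_ne hτsmem.1 (Ne.symm hne0), lt_of_le_of_ne hτsmem.2 hneH⟩,
    hmax', by rw [h0]; exact hbig⟩
end
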